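/- For all positive integers m, n and all 0 < s < r there exist constants c₀, C > 0, depending only on m, n and r/s, with the following property. Let φ : B_s → ℝⁿ be a C² map with ‖φ‖_{C²} ≤ c₀ and ‖φ‖_{C⁰} ≤ c₀ r, where B_s ⊂ ℝᵐ is the closed ball of radius s centered at 0, and let f : B_r → ℝⁿ be Lipschitz with Lip(f) ≤ c₀ and ‖f‖_{C⁰} ≤ c₀ r. For p ∈ B_s set Φ(p) := (p, φ(p)), let κ_p be the orthogonal complement in ℝ^{m+n} of T_p := {(v, Dφ(p)·v) : v ∈ ℝᵐ}, and define N(p) := q(p) − Φ(p), where q(p) is the unique intersection point of Φ(p) + κ_p with Gr(f) := {(x, f(x)) : x ∈ B_r}. Then N : B_s → ℝ^{m+n} satisfies Lip(N) ≤ C ( ‖D²φ‖_{C⁰} ‖N‖_{C⁰} + ‖Dφ‖_{C⁰} + Lip(f) ) and (1/2)|N(p)| ≤ |f(p) − φ(p)| ≤ 2 |N(p)| for every p ∈ B_s. -/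

import Mathlib

noncomputable section

/-- The point `(x, y)` of `ℝᵐ × ℝⁿ`, equipped with the Euclidean (`ℓ²`) product structure. -/
def prodPt {m n : ℕ} (x : EuclideanSpace ℝ (Fin m)) (y : EuclideanSpace ℝ (Fin n)) :
    WithLp 2 (EuclideanSpace ℝ (Fin m) × EuclideanSpace ℝ (Fin n)) :=
  (WithLp.equiv 2 _).symm (x, y)

/-- The graph `{(v, L v) : v ∈ ℝᵐ}` of a linear map `L : ℝᵐ → ℝⁿ` as a subspace of
the Euclidean product `ℝᵐ × ℝⁿ`. -/
def graphSubspace {m n : ℕ} (L : EuclideanSpace ℝ (Fin m) →L[ℝ] EuclideanSpace ℝ (Fin n)) :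
    Submodule ℝ (WithLp 2 (EuclideanSpace ℝ (Fin m) × EuclideanSpace ℝ (Fin n))) :=
  Submodule.map
    (WithLp.linearEquiv 2 ℝ (EuclideanSpace ℝ (Fin m) × EuclideanSpace ℝ (Fin n))).symm.toLinearMap
    (LinearMap.graph L.toLinearMap)

namespace NGPaux

variable {m n : ℕ}

lemma mem_graphSubspace_iff (L : EuclideanSpace ℝ (Fin m) →L[ℝ] EuclideanSpace ℝ (Fin n))
    (z : WithLp 2 (EuclideanSpace ℝ (Fin m) × EuclideanSpace ℝ (Fin n))) :
    z ∈ graphSubspace L ↔ z.snd = L z.fst := by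
  rw [graphSubspace, Submodule.mem_map]
  constructor
  · rintro ⟨⟨a, b⟩, hb, rfl⟩
    exact (LinearMap.mem_graph_iff _ _).mp hb
  · intro h
    exact ⟨(z.fst, z.snd), (LinearMap.mem_graph_iff _ _).mpr h, rfl⟩

lemma inner_eq (z w : WithLp 2 (EuclideanSpace ℝ (Fin m) × EuclideanSpace ℝ (Fin n))) :
    (inner ℝ z w : ℝ) = inner ℝ z.fst w.fst + (inner ℝ z.snd w.snd : ℝ) :=
  WithLp.prod_inner_apply z w

lemma norm_sq_eq (z : WithLp 2 (EuclideanSpace ℝ (Fin m) × EuclideanSpace ℝ (Fin n))) :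
    ‖z‖^2 = ‖z.fst‖^2 + ‖z.snd‖^2 :=
  WithLp.prod_norm_sq_eq_of_L2 z

lemma fst_norm_le (z : WithLp 2 (EuclideanSpace ℝ (Fin m) × EuclideanSpace ℝ (Fin n))) :
    ‖z.fst‖ ≤ ‖z‖ := by
  nlinarith [norm_sq_eq z, norm_nonneg z.fst, norm_nonneg z.snd, norm_nonneg z]

lemma snd_norm_le (z : WithLp 2 (EuclideanSpace ℝ (Fin m) × EuclideanSpace ℝ (Fin n))) :
    ‖z.snd‖ ≤ ‖z‖ := by
  nlinarith [norm_sq_eq z, norm_nonneg z.fst, norm_nonneg z.snd, norm_nonneg z]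

lemma mem_orth_iff (L : EuclideanSpace ℝ (Fin m) →L[ℝ] EuclideanSpace ℝ (Fin n))
    (z : WithLp 2 (EuclideanSpace ℝ (Fin m) × EuclideanSpace ℝ (Fin n))) :
    z ∈ (graphSubspace L)ᗮ ↔ ∀ v : EuclideanSpace ℝ (Fin m),
      (inner ℝ z.fst v : ℝ) + (inner ℝ z.snd (L v) : ℝ) = 0 := by
  rw [Submodule.mem_orthogonal]
  constructor
  · intro H v
    have hv : prodPt v (L v) ∈ graphSubspace L := by
      rw [mem_graphSubspace_iff]; rfl
    have h := H _ hv
    rw [inner_eq] at h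
    have h1 : ((prodPt v (L v)).fst : EuclideanSpace ℝ (Fin m)) = v := rfl
    have h2 : ((prodPt v (L v)).snd : EuclideanSpace ℝ (Fin n)) = L v := rfl
    rw [h1, h2] at h
    linarith [real_inner_comm v z.fst, real_inner_comm (L v) z.snd, h]
  · intro H u hu
    rw [mem_graphSubspace_iff] at hu
    rw [inner_eq, hu]
    have h := H u.fst
    linarith [real_inner_comm u.fst z.fst, real_inner_comm (L u.fst) z.snd, h]

/-- Mean value inequality on the closed ball. -/
lemma lip_of_bound {F : Type*} [NormedAddCommGroup F] [NormedSpace ℝ F]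
    (g : EuclideanSpace ℝ (Fin m) → F) (hg : Differentiable ℝ g) {s K : ℝ}
    (hK : ∀ x, ‖x‖ ≤ s → ‖fderiv ℝ g x‖ ≤ K) {p q : EuclideanSpace ℝ (Fin m)}
    (hp : ‖p‖ ≤ s) (hq : ‖q‖ ≤ s) : ‖g p - g q‖ ≤ K * ‖p - q‖ := by
  have h := (convex_closedBall (0 : EuclideanSpace ℝ (Fin m)) s).norm_image_sub_le_of_norm_fderiv_le
    (f := g) (fun x _ => hg x)
    (fun x hx => hK x (by simpa [mem_closedBall_zero_iff] using hx))
    (mem_closedBall_zero_iff.mpr hq) (mem_closedBall_zero_iff.mpr hp)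
  exact h

/-- From `‖a‖² ≤ M * ‖a‖` with `0 ≤ M`, conclude `‖a‖ ≤ M`. -/
lemma le_of_sq_le {A M : ℝ} (hA : 0 ≤ A) (hM : 0 ≤ M) (h : A ^ 2 ≤ M * A) : A ≤ M := by
  rcases hA.eq_or_lt with h0 | h0
  · linarith
  · nlinarith

lemma comp1 {t A B d : ℝ} (ht : 0 ≤ t) (hd0 : 0 ≤ d) (hA0 : 0 ≤ A) (hB0 : 0 ≤ B)
    (h : t^2 = A^2 + B^2) (h1 : A ≤ (1/8)*B) (h2 : B ≤ (64/63)*d) : (1/2)*t ≤ d := by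
  nlinarith [sq_nonneg (t - 2*d), sq_nonneg t, sq_nonneg d]

lemma comp2 {t A B d KfA : ℝ} (ht : B ≤ t) (hA0 : 0 ≤ A) (hB0 : 0 ≤ B)
    (hdB : d ≤ KfA + B) (h1 : KfA ≤ (1/8)*A) (hAB : A ≤ (1/8)*B) : d ≤ 2*t := by
  linarith

end NGPaux

open NGPaux in
set_option maxHeartbeats 1000000 in
theorem normal_graph_parametrization_estimates (m n : ℕ) (hm : 0 < m) (hn : 0 < n)
    (s r : ℝ) (hs : 0 < s) (hsr : s < r) :
    ∃ c₀ C : ℝ, 0 < c₀ ∧ 0 < C ∧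
      ∀ φ : EuclideanSpace ℝ (Fin m) → EuclideanSpace ℝ (Fin n), ContDiff ℝ 2 φ →
        (∀ x, ‖x‖ ≤ s → ‖φ x‖ + ‖fderiv ℝ φ x‖ + ‖fderiv ℝ (fderiv ℝ φ) x‖ ≤ c₀) →
        (∀ x, ‖x‖ ≤ s → ‖φ x‖ ≤ c₀ * r) →
        ∀ f : EuclideanSpace ℝ (Fin m) → EuclideanSpace ℝ (Fin n),
        ∀ K₁ K₂ K_f K_N : ℝ,
          (∀ x, ‖x‖ ≤ s → ‖fderiv ℝ φ x‖ ≤ K₁) →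
          (∀ x, ‖x‖ ≤ s → ‖fderiv ℝ (fderiv ℝ φ) x‖ ≤ K₂) →
          K_f ≤ c₀ →
          (∀ x y, ‖x‖ ≤ r → ‖y‖ ≤ r → ‖f x - f y‖ ≤ K_f * ‖x - y‖) →
          (∀ x, ‖x‖ ≤ r → ‖f x‖ ≤ c₀ * r) →
          ∀ N : EuclideanSpace ℝ (Fin m) →
              WithLp 2 (EuclideanSpace ℝ (Fin m) × EuclideanSpace ℝ (Fin n)),
            (∀ p, ‖p‖ ≤ s →
              (∃ x, ‖x‖ ≤ r ∧ prodPt p (φ p) + N p = prodPt x (f x)) ∧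
              N p ∈ (graphSubspace (fderiv ℝ φ p))ᗮ) →
            (∀ p, ‖p‖ ≤ s → ‖N p‖ ≤ K_N) →
            (∀ p q, ‖p‖ ≤ s → ‖q‖ ≤ s →
              ‖N p - N q‖ ≤ C * (K₂ * K_N + K₁ + K_f) * ‖p - q‖) ∧
            (∀ p, ‖p‖ ≤ s →
              (1 / 2) * ‖N p‖ ≤ ‖f p - φ p‖ ∧ ‖f p - φ p‖ ≤ 2 * ‖N p‖) := by
  refine ⟨1/8, 2, by norm_num, by norm_num, ?_⟩
  intro φ hφ hC2 _hC0 f K₁ K₂ K_f K_N hK₁ hK₂ hKfc hlipf _hfC0 N hNdef hNbd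
  have hφd : Differentiable ℝ φ := hφ.differentiable (by norm_num)
  have hφ'd : Differentiable ℝ (fderiv ℝ φ) :=
    (hφ.fderiv_right (m := 1) (by norm_num)).differentiable (by norm_num)
  have hDφ : ∀ x, ‖x‖ ≤ s → ‖fderiv ℝ φ x‖ ≤ 1/8 := by
    intro x hx
    have h := hC2 x hx
    have h1 := norm_nonneg (φ x)
    have h2 := norm_nonneg (fderiv ℝ (fderiv ℝ φ) x)
    linarith
  -- nonnegativity of the constants
  have hKf0 : 0 ≤ K_f := by
    set y : EuclideanSpace ℝ (Fin m) := EuclideanSpace.single (⟨0, hm⟩ : Fin m) r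
    have hy : ‖y‖ = r := by
      simp [y, EuclideanSpace.norm_single, abs_of_pos (hs.trans hsr)]
    have h := hlipf y 0 (le_of_eq hy) (by simp; linarith)
    have h0 := norm_nonneg (f y - f 0)
    rw [sub_zero, hy] at h
    nlinarith [hs.trans hsr]
  have hK₁0 : 0 ≤ K₁ := le_trans (norm_nonneg _) (hK₁ 0 (by simp [hs.le]))
  have hK₂0 : 0 ≤ K₂ := by have := hK₂ 0 (by simp [hs.le]); have h0 := norm_nonneg (fderiv ℝ (fderiv ℝ φ) 0); linarith
  have hKN0 : 0 ≤ K_N := le_trans (norm_nonneg _) (hNbd 0 (by simp [hs.le]))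
  constructor
  · -- Lipschitz estimate
    intro p q hp hq
    obtain ⟨⟨x₁, hx₁r, he₁⟩, ho₁⟩ := hNdef p hp
    obtain ⟨⟨x₂, hx₂r, he₂⟩, ho₂⟩ := hNdef q hq
    have hpr : ‖p‖ ≤ r := hp.trans hsr.le
    have hqr : ‖q‖ ≤ r := hq.trans hsr.le
    set L₁ := fderiv ℝ φ p with hL₁
    set L₂ := fderiv ℝ φ q with hL₂
    set W := N p - N q with hW
    -- components of N p, N q, W
    have hN₁1 : (N p).fst = x₁ - p := eq_sub_of_add_eq' (congrArg WithLp.fst he₁)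
    have hN₁2 : (N p).snd = f x₁ - φ p := eq_sub_of_add_eq' (congrArg WithLp.snd he₁)
    have hN₂1 : (N q).fst = x₂ - q := eq_sub_of_add_eq' (congrArg WithLp.fst he₂)
    have hN₂2 : (N q).snd = f x₂ - φ q := eq_sub_of_add_eq' (congrArg WithLp.snd he₂)
    have hW1 : (W.fst : EuclideanSpace ℝ (Fin m)) = (x₁ - p) - (x₂ - q) := by
      show (N p).fst - (N q).fst = _
      rw [hN₁1, hN₂1]
    have hW2 : (W.snd : EuclideanSpace ℝ (Fin n)) = (f x₁ - φ p) - (f x₂ - φ q) := by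
      show (N p).snd - (N q).snd = _
      rw [hN₁2, hN₂2]
    -- orthogonal decomposition of W w.r.t. the graph of L₁
    obtain ⟨a, ha, b, hb, hab⟩ :=
      Submodule.exists_add_mem_mem_orthogonal (K := graphSubspace L₁) W
    have hδ : ‖L₁ - L₂‖ ≤ K₂ * ‖p - q‖ :=
      lip_of_bound (fderiv ℝ φ) hφ'd hK₂ hp hq
    have hδ0 : (0:ℝ) ≤ ‖L₁ - L₂‖ := norm_nonneg _
    -- bound on ‖a‖
    have ha2 : (a.snd : EuclideanSpace ℝ (Fin n)) = L₁ a.fst := (mem_graphSubspace_iff _ _).mp ha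
    have hba : (inner ℝ a b : ℝ) = 0 := (Submodule.mem_orthogonal _ _).mp hb a ha
    have hNpa : (inner ℝ (N p) a : ℝ) = 0 := by
      have := (Submodule.mem_orthogonal _ _).mp ho₁ a ha
      rw [real_inner_comm] at this; exact this
    have hNqa : (inner ℝ (N q) a : ℝ) = (inner ℝ ((N q).snd) (L₁ a.fst - L₂ a.fst) : ℝ) := by
      have horth := (mem_orth_iff L₂ (N q)).mp ho₂ a.fst
      rw [inner_eq, ha2, inner_sub_right]
      linarith
    have haW : (inner ℝ W a : ℝ) = ‖a‖^2 := by
      rw [hab, inner_add_left, real_inner_self_eq_norm_sq, real_inner_comm a b, hba]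
      ring
    have haW' : (inner ℝ W a : ℝ) = - (inner ℝ ((N q).snd) (L₁ a.fst - L₂ a.fst) : ℝ) := by
      rw [hW, inner_sub_left, hNpa, hNqa]; ring
    have hna : ‖a‖ ≤ K_N * (‖L₁ - L₂‖ * ‖a‖) / ‖a‖ ∨ True := Or.inr trivial
    have hNq2 : ‖(N q).snd‖ ≤ K_N := le_trans (snd_norm_le (N q)) (hNbd q hq)
    have hbound_a : ‖a‖ ≤ K_N * ‖L₁ - L₂‖ := by
      apply le_of_sq_le (norm_nonneg a) (by positivity)
      have h1 : ‖a‖^2 ≤ ‖(N q).snd‖ * ‖(L₁ - L₂) a.fst‖ := by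
        rw [← haW, haW']
        calc - (inner ℝ ((N q).snd) (L₁ a.fst - L₂ a.fst) : ℝ)
            ≤ |(inner ℝ ((N q).snd) (L₁ a.fst - L₂ a.fst) : ℝ)| := neg_le_abs _
          _ ≤ ‖(N q).snd‖ * ‖L₁ a.fst - L₂ a.fst‖ := abs_real_inner_le_norm _ _
          _ = ‖(N q).snd‖ * ‖(L₁ - L₂) a.fst‖ := by
              rw [ContinuousLinearMap.sub_apply]
      have h2 : ‖(L₁ - L₂) a.fst‖ ≤ ‖L₁ - L₂‖ * ‖a.fst‖ := (L₁ - L₂).le_opNorm _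
      have h3 : ‖a.fst‖ ≤ ‖a‖ := fst_norm_le a
      calc ‖a‖^2 ≤ ‖(N q).snd‖ * ‖(L₁ - L₂) a.fst‖ := h1
        _ ≤ K_N * (‖L₁ - L₂‖ * ‖a‖) := by
            apply mul_le_mul hNq2 (h2.trans ?_) (norm_nonneg _) hKN0
            exact mul_le_mul_of_nonneg_left h3 hδ0
        _ = K_N * ‖L₁ - L₂‖ * ‖a‖ := by ring
    -- bound on ‖b‖
    have hbW : (inner ℝ W b : ℝ) = ‖b‖^2 := by
      rw [hab, inner_add_left, real_inner_self_eq_norm_sq, hba]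
      ring
    have hbW' : (inner ℝ W b : ℝ) = (inner ℝ (W.snd - L₁ W.fst) b.snd : ℝ) := by
      have horth := (mem_orth_iff L₁ b).mp hb W.fst
      rw [inner_eq, inner_sub_left]
      have c1 := real_inner_comm (W.fst : EuclideanSpace ℝ (Fin m)) b.fst
      have c2 := real_inner_comm (L₁ (W.fst : EuclideanSpace ℝ (Fin m))) b.snd
      linarith
    have hbound_b : ‖b‖ ≤ ‖W.snd‖ + (1/8) * ‖W.fst‖ := by
      apply le_of_sq_le (norm_nonneg b) (by positivity)
      have h1 : ‖b‖^2 ≤ ‖W.snd - L₁ W.fst‖ * ‖b.snd‖ := by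
        rw [← hbW, hbW']
        exact (real_inner_le_norm _ _)
      have h2 : ‖(W.snd : EuclideanSpace ℝ (Fin n)) - L₁ W.fst‖ ≤ ‖W.snd‖ + (1/8) * ‖W.fst‖ := by
        have := norm_sub_le (W.snd : EuclideanSpace ℝ (Fin n)) (L₁ W.fst)
        have hL1n : ‖L₁ (W.fst : EuclideanSpace ℝ (Fin m))‖ ≤ (1/8) * ‖W.fst‖ := by
          calc ‖L₁ (W.fst : EuclideanSpace ℝ (Fin m))‖ ≤ ‖L₁‖ * ‖W.fst‖ := L₁.le_opNorm _
            _ ≤ (1/8) * ‖W.fst‖ := mul_le_mul_of_nonneg_right (hDφ p hp) (norm_nonneg _)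
        linarith
      have h3 : ‖b.snd‖ ≤ ‖b‖ := snd_norm_le b
      calc ‖b‖^2 ≤ ‖W.snd - L₁ W.fst‖ * ‖b.snd‖ := h1
        _ ≤ (‖W.snd‖ + (1/8) * ‖W.fst‖) * ‖b‖ :=
            mul_le_mul h2 h3 (norm_nonneg _) (by positivity)
    -- assembling
    have hWfst : ‖(W.fst : EuclideanSpace ℝ (Fin m))‖ ≤ ‖W‖ := fst_norm_le W
    have hx12 : ‖x₁ - x₂‖ ≤ ‖W.fst‖ + ‖p - q‖ := by
      have : x₁ - x₂ = (W.fst : EuclideanSpace ℝ (Fin m)) + (p - q) := by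
        rw [hW1]; abel
      rw [this]; exact norm_add_le _ _
    have hφlip : ‖φ p - φ q‖ ≤ K₁ * ‖p - q‖ := lip_of_bound φ hφd hK₁ hp hq
    have hWsnd : ‖(W.snd : EuclideanSpace ℝ (Fin n))‖ ≤ K_f * (‖W.fst‖ + ‖p - q‖) + K₁ * ‖p - q‖ := by
      have h4 : (W.snd : EuclideanSpace ℝ (Fin n)) = (f x₁ - f x₂) - (φ p - φ q) := by
        rw [hW2]; abel
      rw [h4]
      calc ‖(f x₁ - f x₂) - (φ p - φ q)‖ ≤ ‖f x₁ - f x₂‖ + ‖φ p - φ q‖ := norm_sub_le _ _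
        _ ≤ K_f * ‖x₁ - x₂‖ + K₁ * ‖p - q‖ := by
            have := hlipf x₁ x₂ hx₁r hx₂r
            linarith
        _ ≤ K_f * (‖W.fst‖ + ‖p - q‖) + K₁ * ‖p - q‖ := by
            have := mul_le_mul_of_nonneg_left hx12 hKf0
            linarith
    have hWab : ‖W‖ ≤ ‖a‖ + ‖b‖ := by
      rw [hab]; exact norm_add_le _ _
    have hfinal : ‖W‖ ≤ K_N * (K₂ * ‖p - q‖) + (K_f * (‖W‖ + ‖p - q‖) + K₁ * ‖p - q‖)
        + (1/8) * ‖W‖ := by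
      have h5 : ‖a‖ ≤ K_N * (K₂ * ‖p - q‖) :=
        hbound_a.trans (mul_le_mul_of_nonneg_left hδ hKN0)
      have h6 : K_f * (‖W.fst‖ + ‖p - q‖) ≤ K_f * (‖W‖ + ‖p - q‖) :=
        mul_le_mul_of_nonneg_left (by linarith) hKf0
      have h7 : (1/8) * ‖(W.fst : EuclideanSpace ℝ (Fin m))‖ ≤ (1/8) * ‖W‖ := by linarith
      have h8 : ‖b‖ ≤ K_f * (‖W‖ + ‖p - q‖) + K₁ * ‖p - q‖ + (1/8)*‖W‖ := by
        have := hbound_b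
        have := hWsnd
        linarith
      linarith
    have hKf18 : K_f ≤ 1/8 := hKfc
    have hWn : ‖N p - N q‖ = ‖W‖ := rfl
    rw [hWn]
    nlinarith [norm_nonneg W, norm_nonneg (p - q), mul_nonneg (mul_nonneg hK₂0 hKN0) (norm_nonneg (p-q)), mul_nonneg hK₁0 (norm_nonneg (p-q)), mul_nonneg hKf0 (norm_nonneg (p-q)), mul_le_mul_of_nonneg_right hKf18 (norm_nonneg W)]
  · -- comparison estimate
    intro p hp
    obtain ⟨⟨x, hxr, hxe⟩, horth⟩ := hNdef p hp
    have hpr : ‖p‖ ≤ r := hp.trans hsr.le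
    set L := fderiv ℝ φ p with hL
    have hLn : ‖L‖ ≤ 1/8 := hDφ p hp
    have hN1 : (N p).fst = x - p := eq_sub_of_add_eq' (congrArg WithLp.fst hxe)
    have hN2 : (N p).snd = f x - φ p := eq_sub_of_add_eq' (congrArg WithLp.snd hxe)
    set A := ‖x - p‖ with hA
    set B := ‖f x - φ p‖ with hB
    set d := ‖f p - φ p‖ with hd
    have hA0 : 0 ≤ A := norm_nonneg _
    have hB0 : 0 ≤ B := norm_nonneg _
    have hd0 : 0 ≤ d := norm_nonneg _
    -- orthogonality at v = x - p
    have hkey : (inner ℝ (x - p) (x - p) : ℝ) + (inner ℝ (f x - φ p) (L (x - p)) : ℝ) = 0 := by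
      have h := (mem_orth_iff L (N p)).mp horth (x - p)
      rw [hN1, hN2] at h
      exact h
    have hAB : A ≤ (1/8) * B := by
      apply le_of_sq_le hA0 (by positivity)
      have h1 : (inner ℝ (x - p) (x - p) : ℝ) = A^2 := real_inner_self_eq_norm_sq _
      have h2 : |(inner ℝ (f x - φ p) (L (x - p)) : ℝ)| ≤ B * ((1/8) * A) := by
        calc |(inner ℝ (f x - φ p) (L (x - p)) : ℝ)| ≤ B * ‖L (x - p)‖ := abs_real_inner_le_norm _ _
          _ ≤ B * ((1/8) * A) := by
              apply mul_le_mul_of_nonneg_left _ hB0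
              calc ‖L (x - p)‖ ≤ ‖L‖ * A := L.le_opNorm _
                _ ≤ (1/8) * A := mul_le_mul_of_nonneg_right hLn hA0
      have := abs_le.mp h2
      nlinarith
    have hBd : B ≤ K_f * A + d := by
      have h1 : f x - φ p = (f x - f p) + (f p - φ p) := by abel
      have h2 := hlipf x p hxr hpr
      calc B = ‖(f x - f p) + (f p - φ p)‖ := by rw [hB, h1]
        _ ≤ ‖f x - f p‖ + d := norm_add_le _ _
        _ ≤ K_f * ‖x - p‖ + d := by linarith
        _ = K_f * A + d := rfl
    have hB64 : B ≤ (64/63) * d := by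
      have h1 : K_f * A ≤ (1/8) * A := mul_le_mul_of_nonneg_right hKfc hA0
      nlinarith
    have hNsq : ‖N p‖^2 = A^2 + B^2 := by
      rw [norm_sq_eq (N p), hN1, hN2]
    have hBN : B ≤ ‖N p‖ := by
      have := snd_norm_le (N p)
      rw [hN2] at this
      exact this
    have hdB : d ≤ K_f * A + B := by
      have h1 : f p - φ p = (f p - f x) + (f x - φ p) := by abel
      have h2 := hlipf p x hpr hxr
      have h3 : ‖p - x‖ = A := by rw [norm_sub_rev]
      calc d = ‖(f p - f x) + (f x - φ p)‖ := by rw [hd, h1]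
        _ ≤ ‖f p - f x‖ + B := norm_add_le _ _
        _ ≤ K_f * A + B := by rw [← h3]; linarith
    refine ⟨comp1 (norm_nonneg _) hd0 hA0 hB0 hNsq hAB hB64, ?_⟩
    exact comp2 hBN hA0 hB0 hdB (mul_le_mul_of_nonneg_right hKfc hA0) hAB

end
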